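/- Let A₀, A₁ be q×m real matrices with rank m and b₀, b₁ ∈ ℝ^q lie in the column spaces of A₀, A₁ respectively. Define s_r = (A_rᵀA_r)⁻¹A_rᵀ b_r for r = 0,1 and suppose s₀(j) + s₁(j) > 0 for all j. Then the map (A₀, A₁, b₀, b₁) ↦ (s₀(j)/(s₀(j)+s₁(j)))_{j ∈ Fin m} is well defined and yields the unique vector t ∈ [0,1]^m such that A_r·(t_r ⊙ c) = b_r is solvable with t₀(j) + t₁(j) = 1 where t₁ = 1 − t₀ and c(j) = s₀(j)+s₁(j). -/

import Mathlib

open Matrix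

lemma isUnit_of_rank_eq_aux {m : ℕ} (B : Matrix (Fin m) (Fin m) ℝ) (h : B.rank = m) :
    IsUnit B := by
  rw [← Matrix.mulVec_surjective_iff_isUnit]
  have htop : LinearMap.range B.mulVecLin = ⊤ := by
    apply Submodule.eq_top_of_finrank_eq
    rw [Matrix.rank] at h
    simp [h]
  intro b
  obtain ⟨x, hx⟩ := LinearMap.range_eq_top.mp htop b
  exact ⟨x, by simpa [Matrix.mulVecLin_apply] using hx⟩

lemma key_aux {q m : ℕ} (A : Matrix (Fin q) (Fin m) ℝ) (hrank : A.rank = m)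
    (b : Fin q → ℝ) (hb : ∃ s, A.mulVec s = b) :
    A.mulVec ((Aᵀ * A)⁻¹.mulVec (Aᵀ.mulVec b)) = b ∧
    Function.Injective A.mulVec := by
  have hU : IsUnit (Aᵀ * A) := isUnit_of_rank_eq_aux _ (by rw [Matrix.rank_transpose_mul_self, hrank])
  have hinv : (Aᵀ * A)⁻¹ * (Aᵀ * A) = 1 :=
    Matrix.nonsing_inv_mul _ ((Matrix.isUnit_iff_isUnit_det _).mp hU)
  have hinj : Function.Injective A.mulVec := by
    intro x y hxy
    have h1 : ((Aᵀ * A)⁻¹ * (Aᵀ * A)).mulVec x = ((Aᵀ * A)⁻¹ * (Aᵀ * A)).mulVec y := by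
      rw [← Matrix.mulVec_mulVec, ← Matrix.mulVec_mulVec, ← Matrix.mulVec_mulVec,
        ← Matrix.mulVec_mulVec, hxy]
    simpa [hinv] using h1
  refine ⟨?_, hinj⟩
  obtain ⟨s, hs⟩ := hb
  have : (Aᵀ * A)⁻¹.mulVec (Aᵀ.mulVec b) = s := by
    rw [← hs, Matrix.mulVec_mulVec, Matrix.mulVec_mulVec, Matrix.mul_assoc, hinv,
      Matrix.one_mulVec]
  rw [this, hs]

theorem identified_conditional_probabilities
    (q m : ℕ) (A₀ A₁ : Matrix (Fin q) (Fin m) ℝ)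
    (hrank₀ : A₀.rank = m) (hrank₁ : A₁.rank = m)
    (b₀ b₁ : Fin q → ℝ)
    (hb₀ : ∃ s, A₀.mulVec s = b₀) (hb₁ : ∃ s, A₁.mulVec s = b₁)
    (s₀ s₁ : Fin m → ℝ)
    (hs₀ : s₀ = (A₀ᵀ * A₀)⁻¹.mulVec (A₀ᵀ.mulVec b₀))
    (hs₁ : s₁ = (A₁ᵀ * A₁)⁻¹.mulVec (A₁ᵀ.mulVec b₁))
    (hpos : ∀ j, 0 < s₀ j + s₁ j)
    (c t : Fin m → ℝ)
    (hc : ∀ j, c j = s₀ j + s₁ j)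
    (ht : ∀ j, t j = s₀ j / (s₀ j + s₁ j)) :
    A₀.mulVec (fun j => t j * c j) = b₀ ∧
    A₁.mulVec (fun j => (1 - t j) * c j) = b₁ ∧
    ∀ t' : Fin m → ℝ,
      A₀.mulVec (fun j => t' j * c j) = b₀ →
      A₁.mulVec (fun j => (1 - t' j) * c j) = b₁ →
      t' = t := by
  obtain ⟨h₀, hinj₀⟩ := key_aux A₀ hrank₀ b₀ hb₀
  obtain ⟨h₁, hinj₁⟩ := key_aux A₁ hrank₁ b₁ hb₁
  have htc : (fun j => t j * c j) = s₀ := by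
    funext j
    rw [ht, hc, div_mul_cancel₀ _ (hpos j).ne']
  have htc' : (fun j => (1 - t j) * c j) = s₁ := by
    funext j
    have hne := (hpos j).ne'
    rw [ht, hc]
    field_simp
    ring
  refine ⟨by rw [htc, hs₀]; exact h₀, by rw [htc', hs₁]; exact h₁, ?_⟩
  intro t' h₀' h₁'
  have : (fun j => t' j * c j) = (fun j => t j * c j) := by
    apply hinj₀
    rw [htc, hs₀, h₀', h₀]
  funext j
  have hj := congrFun this j
  have hcj : c j ≠ 0 := by rw [hc]; exact (hpos j).ne'
  exact mul_right_cancel₀ hcj hj
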